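/- Let G be a finite simple graph with at least one vertex. Then for every natural number i ≥ 2, d_0(K_1 ∘ G, i) = d_0(G, i), where K_1 ∘ G is the graph obtained from G by adding one new vertex adjacent to every vertex of G. -/

import Mathlib

open Finset

/-- `S` is a dominating set of `G`: every vertex not in `S` is adjacent to a vertex of `S`. -/
def IsDominatingSet {V : Type*} (G : SimpleGraph V) (S : Finset V) : Prop :=
  ∀ v : V, v ∉ S → ∃ u ∈ S, G.Adj u v

/-- `S` is an isolate dominating set of `G`: a dominating set whose induced
subgraph has an isolated vertex. -/
def IsIsolateDominatingSet {V : Type*} (G : SimpleGraph V) (S : Finset V) : Prop :=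
  IsDominatingSet G S ∧ ∃ v ∈ S, ∀ u ∈ S, ¬ G.Adj v u

/-- `d(G, i)`: the number of dominating sets of `G` of cardinality `i`. -/
noncomputable def domCount {V : Type*} [Fintype V] (G : SimpleGraph V) (i : ℕ) : ℕ :=
  Set.ncard {S : Finset V | IsDominatingSet G S ∧ S.card = i}

/-- `d₀(G, i)`: the number of isolate dominating sets of `G` of cardinality `i`. -/
noncomputable def isoDomCount {V : Type*} [Fintype V] (G : SimpleGraph V) (i : ℕ) : ℕ :=
  Set.ncard {S : Finset V | IsIsolateDominatingSet G S ∧ S.card = i}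

/-- `γ₀(G)`: the isolate domination number, the minimum cardinality of an
isolate dominating set of `G`. -/
noncomputable def isoDomNumber {V : Type*} [Fintype V] (G : SimpleGraph V) : ℕ :=
  sInf {k : ℕ | ∃ S : Finset V, IsIsolateDominatingSet G S ∧ S.card = k}

/-- The corona `K₁ ∘ G`: a copy of `G` together with one new vertex joined to
every vertex of `G`. -/
def coneK1 {V : Type*} (G : SimpleGraph V) : SimpleGraph (Option V) where
  Adj v w :=
    match v, w with
    | some a, some b => G.Adj a b
    | some _, none => True
    | none, some _ => True
    | none, none => False
  symm := by
    constructor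
    rintro (a | a) (b | b) h <;> simp_all
    exact G.adj_symm h
  loopless := by
    constructor
    rintro (a | a) h <;> simp_all

theorem isoDomCount_coneK1 {V : Type*} [Fintype V] [Nonempty V]
    (G : SimpleGraph V) (i : ℕ) (hi : 2 ≤ i) :
    isoDomCount (coneK1 G) i = isoDomCount G i := by
  classical
  unfold isoDomCount
  have hAdjSome : ∀ a b : V, (coneK1 G).Adj (some a) (some b) ↔ G.Adj a b := by
    intro a b; rfl
  have hAdjNone : ∀ a : V, (coneK1 G).Adj (some a) none := fun a => trivial
  have hAdjNone' : ∀ a : V, (coneK1 G).Adj none (some a) := fun a => trivial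
  have hset : {S : Finset (Option V) | IsIsolateDominatingSet (coneK1 G) S ∧ S.card = i}
      = (fun T : Finset V => T.map ⟨some, Option.some_injective V⟩) ''
        {T : Finset V | IsIsolateDominatingSet G T ∧ T.card = i} := by
    ext S
    simp only [Set.mem_setOf_eq, Set.mem_image]
    constructor
    · rintro ⟨⟨hdom, v, hvS, hiso⟩, hcard⟩
      have hnone : (none : Option V) ∉ S := by
        intro hn
        cases v with
        | none =>
          have hsub : S ⊆ {none} := by
            intro u hu
            cases u with
            | none => simp
            | some b => exact absurd (hAdjNone' b) (hiso (some b) hu)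
          have := Finset.card_le_card hsub
          simp [hcard] at this
          omega
        | some a => exact hiso none hn (hAdjNone a)
      set T : Finset V := S.preimage some (Option.some_injective V).injOn with hT
      have hST : T.map ⟨some, Option.some_injective V⟩ = S := by
        ext o
        cases o with
        | none => simp [hnone]
        | some a => simp [hT, Finset.mem_preimage]
      refine ⟨T, ⟨⟨?_, ?_⟩, ?_⟩, hST⟩
      · intro a haT
        have : (some a : Option V) ∉ S := by
          simpa [hT, Finset.mem_preimage] using haT
        obtain ⟨u, huS, hadj⟩ := hdom (some a) this
        cases u with
        | none => exact absurd huS hnone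
        | some b =>
          exact ⟨b, by simpa [hT, Finset.mem_preimage] using huS, (hAdjSome b a).mp hadj⟩
      · cases v with
        | none => exact absurd hvS hnone
        | some a =>
          refine ⟨a, by simpa [hT, Finset.mem_preimage] using hvS, ?_⟩
          intro u huT hadju
          exact hiso (some u) (by simpa [hT, Finset.mem_preimage] using huT)
            ((hAdjSome a u).mpr hadju)
      · have : (T.map ⟨some, Option.some_injective V⟩).card = T.card := Finset.card_map _
        rw [hST] at this
        omega
    · rintro ⟨T, ⟨⟨hdom, v, hvT, hiso⟩, hcard⟩, rfl⟩
      have hnone : (none : Option V) ∉ T.map ⟨some, Option.some_injective V⟩ := by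
        simp
      refine ⟨⟨?_, ⟨some v, by simp [hvT], ?_⟩⟩, by simp [hcard]⟩
      · intro o hoS
        cases o with
        | none =>
          have hT0 : T.Nonempty := ⟨v, hvT⟩
          obtain ⟨t, ht⟩ := hT0
          exact ⟨some t, by simp [ht], hAdjNone t⟩
        | some a =>
          have : a ∉ T := by simpa using hoS
          obtain ⟨u, huT, hadj⟩ := hdom a this
          exact ⟨some u, by simp [huT], (hAdjSome u a).mpr hadj⟩
      · intro u huS
        cases u with
        | none => exact absurd huS hnone
        | some b =>
          intro hadj
          exact hiso b (by simpa using huS) ((hAdjSome v b).mp hadj)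
  rw [hset]
  exact Set.ncard_image_of_injective _ (Finset.map_injective _)
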